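/- Let T : ℓ¹ → Y be a bounded linear injective operator to a Banach space Y, and let P_n : ℓ¹ → ℓ¹ be the projection onto the first n coordinates. Then the condition 'for all n ∈ ℕ there exists ν_n > 0 with ‖P_n x‖_{ℓ¹} ≤ ν_n ‖T x‖_Y for all x ∈ ℓ¹' holds if and only if every standard unit sequence e_n ∈ ℓ^∞ ≅ (ℓ¹)* lies in the range of the adjoint T* : Y* → ℓ^∞. -/

import Mathlib

open NormedSpace

/-- for an injective bounded linear operator T : ℓ¹ → Y, the condition
‖P_n x‖_{ℓ¹} ≤ ν_n ‖T x‖ (P_n the projection onto the first n coordinates) holds for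
suitable constants ν_n iff every unit sequence e_n ∈ ℓ^∞ = (ℓ¹)* lies in the range of T*. -/
theorem stmt9 {Y : Type*} [NormedAddCommGroup Y] [NormedSpace ℝ Y] [CompleteSpace Y]
    (T : lp (fun _ : ℕ => ℝ) 1 →L[ℝ] Y) (hT : Function.Injective T) :
    (∀ n : ℕ, ∃ ν : ℝ, 0 < ν ∧ ∀ x : lp (fun _ : ℕ => ℝ) 1,
        (∑ i ∈ Finset.range n, |x i|) ≤ ν * ‖T x‖) ↔
    (∀ n : ℕ, ∃ ψ : StrongDual ℝ Y, ∀ x : lp (fun _ : ℕ => ℝ) 1, ψ (T x) = x n) := by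
  constructor
  · intro h n
    obtain ⟨ν, hν, hb⟩ := h (n + 1)
    have key : ∀ x : lp (fun _ : ℕ => ℝ) 1, |x n| ≤ ν * ‖T x‖ := by
      intro x
      refine le_trans ?_ (hb x)
      exact Finset.single_le_sum (f := fun i => |x i|) (fun i _ => abs_nonneg _)
        (Finset.mem_range.mpr (Nat.lt_succ_self n))
    set S := T.toLinearMap.rangeRestrict with hS
    have hSinj : Function.Injective S := by
      intro a b hab
      exact hT (congrArg Subtype.val hab)
    have hSbij : Function.Bijective S := ⟨hSinj, LinearMap.surjective_rangeRestrict _⟩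
    let e := LinearEquiv.ofBijective S hSbij
    let f₀ : (LinearMap.range T.toLinearMap) →ₗ[ℝ] ℝ :=
      { toFun := fun y => (e.symm y : lp (fun _ : ℕ => ℝ) 1) n
        map_add' := by
          intro a b
          simp only [map_add]
          exact congrFun (lp.coeFn_add _ _) n
        map_smul' := by
          intro c a
          simp only [map_smul, RingHom.id_apply]
          exact congrFun (lp.coeFn_smul _ _) n }
    have hbound : ∀ y : (LinearMap.range T.toLinearMap), ‖f₀ y‖ ≤ ν * ‖y‖ := by
      intro y
      have h1 : S (e.symm y) = y := e.apply_symm_apply y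
      have h2 : T (e.symm y) = (y : Y) := congrArg Subtype.val h1
      have := key (e.symm y)
      rw [h2] at this
      simpa [f₀, Real.norm_eq_abs] using this
    let F : (LinearMap.range T.toLinearMap) →L[ℝ] ℝ := f₀.mkContinuous ν hbound
    obtain ⟨g, hg, -⟩ := exists_extension_norm_eq (LinearMap.range T.toLinearMap) F
    refine ⟨g, fun x => ?_⟩
    have hmem : T x ∈ LinearMap.range T.toLinearMap := ⟨x, rfl⟩
    have h3 : (⟨T x, hmem⟩ : LinearMap.range T.toLinearMap) = S x := rfl
    have h4 : e.symm (S x) = x := e.symm_apply_apply x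
    have := hg ⟨T x, hmem⟩
    simpa [F, f₀, h3, h4] using this
  · intro h n
    choose ψ hψ using h
    refine ⟨(∑ i ∈ Finset.range n, ‖ψ i‖) + 1, by positivity, fun x => ?_⟩
    calc ∑ i ∈ Finset.range n, |x i|
        ≤ ∑ i ∈ Finset.range n, ‖ψ i‖ * ‖T x‖ := by
          refine Finset.sum_le_sum fun i _ => ?_
          rw [← hψ i x, ← Real.norm_eq_abs]
          exact (ψ i).le_opNorm (T x)
      _ = (∑ i ∈ Finset.range n, ‖ψ i‖) * ‖T x‖ := (Finset.sum_mul _ _ _).symm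
      _ ≤ ((∑ i ∈ Finset.range n, ‖ψ i‖) + 1) * ‖T x‖ := by
          refine mul_le_mul_of_nonneg_right ?_ (norm_nonneg _)
          linarith
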